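/- Let n ≥ 1. In the polynomial ring ℤ[S,T], let I be the ideal generated by S^{n+1} and T^n + S·T^{n−1} + … + S^n (that is, Σ_{i=0}^{n} S^i T^{n−i}). Then (T−S)^{2n−1} is congruent modulo I to (−1)^n·C(2n−1,n)·(T^{n−1}S^n − T^n S^{n−1}), where C(2n−1,n) is the binomial coefficient, and (T−S)^{2n−1} ∉ I. -/

import Mathlib

open Finset MvPolynomial

theorem stmt12aux {Q : Type*} [CommRing Q] (k : ℕ) (s t : Q)
    (h1 : s ^ (k + 1 + 1) = 0)
    (h2 : ∑ i ∈ Finset.range (k + 1 + 1), s ^ i * t ^ (k + 1 - i) = 0) :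
    (t - s) ^ (2 * k + 1) =
      (-1 : Q) ^ (k + 1) * ((2 * k + 1).choose (k + 1) : Q) *
        (t ^ k * s ^ (k + 1) - t ^ (k + 1) * s ^ k) := by
  have h3 : t ^ (k + 1 + 1) = 0 := by
    have hg := geom_sum₂_mul s t (k + 1 + 1)
    have e : ∀ i, k + 1 + 1 - 1 - i = k + 1 - i := fun i => by omega
    simp only [e] at hg
    rw [h2, zero_mul] at hg
    linear_combination hg + h1
  rw [sub_eq_add_neg, add_pow]
  have hsub : ({k, k + 1} : Finset ℕ) ⊆ range (2 * k + 1 + 1) := by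
    intro x hx
    simp only [Finset.mem_insert, Finset.mem_singleton] at hx
    rcases hx with rfl | rfl <;> simp <;> omega
  have hvan : ∀ x ∈ range (2 * k + 1 + 1), x ∉ ({k, k + 1} : Finset ℕ) →
      t ^ x * (-s) ^ (2 * k + 1 - x) * ((2 * k + 1).choose x : Q) = 0 := by
    intro x hx hnot
    simp only [Finset.mem_insert, Finset.mem_singleton, not_or] at hnot
    rw [Finset.mem_range] at hx
    by_cases hxk : x < k
    · have e : 2 * k + 1 - x = (k + 1 + 1) + (2 * k + 1 - x - (k + 1 + 1)) := by omega
      rw [e, pow_add, neg_pow, h1]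
      ring
    · have e : x = (k + 1 + 1) + (x - (k + 1 + 1)) := by omega
      rw [e, pow_add, h3]
      ring
  rw [← Finset.sum_subset hsub hvan, Finset.sum_pair (show k ≠ k + 1 by omega)]
  have e1 : 2 * k + 1 - k = k + 1 := by omega
  have e2 : 2 * k + 1 - (k + 1) = k := by omega
  rw [e1, e2]
  have hcc : (2 * k + 1).choose k = (2 * k + 1).choose (k + 1) := by
    rw [← Nat.choose_symm (show k + 1 ≤ 2 * k + 1 by omega)]
    congr 1
    omega
  rw [hcc, neg_pow, neg_pow]
  ring

theorem stmt12aux2 (k : ℕ) :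
    MvPolynomial.coeff (Finsupp.single 0 (k + 1) + Finsupp.single 1 (k + 1))
      ((MvPolynomial.X 1 - MvPolynomial.X 0 : MvPolynomial (Fin 2) ℤ) ^ (2 * k + 2)) =
      (-1 : ℤ) ^ (k + 1) * ((2 * k + 2).choose (k + 1) : ℤ) := by
  set μ : Fin 2 →₀ ℕ := Finsupp.single 0 (k + 1) + Finsupp.single 1 (k + 1) with hμ
  rw [sub_eq_add_neg, add_pow, coeff_sum]
  have hterm : ∀ j ∈ range (2 * k + 2 + 1),
      coeff μ ((X 1 : MvPolynomial (Fin 2) ℤ) ^ j * (-X 0) ^ (2 * k + 2 - j) *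
        ((2 * k + 2).choose j : MvPolynomial (Fin 2) ℤ)) =
      if j = k + 1 then (-1 : ℤ) ^ (k + 1) * ((2 * k + 2).choose (k + 1) : ℤ) else 0 := by
    intro j hj
    rw [Finset.mem_range] at hj
    set i := 2 * k + 2 - j with hi
    have hre : (X 1 : MvPolynomial (Fin 2) ℤ) ^ j * (-X 0) ^ i *
        ((2 * k + 2).choose j : MvPolynomial (Fin 2) ℤ) =
        C ((-1 : ℤ) ^ i * ((2 * k + 2).choose j : ℤ)) *
          (X 0 ^ i * X 1 ^ j) := by
      rw [neg_pow, map_mul, map_pow, map_neg, map_one, map_natCast]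
      ring
    rw [hre, coeff_C_mul, X_pow_eq_monomial, X_pow_eq_monomial, monomial_mul, one_mul,
      coeff_monomial]
    by_cases hjk : j = k + 1
    · subst hjk
      have hik : i = k + 1 := by omega
      rw [hik, if_pos rfl, if_pos rfl, mul_one]
    · rw [if_neg hjk, if_neg, mul_zero]
      intro heq
      have h1 := congrArg (fun f : Fin 2 →₀ ℕ => f 1) heq
      simp only [hμ, Finsupp.add_apply, Finsupp.single_apply] at h1
      norm_num at h1
      exact hjk h1
  rw [Finset.sum_congr rfl hterm, Finset.sum_ite_eq' (range (2 * k + 2 + 1)) (k + 1)]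
  rw [if_pos (by simp; omega)]

/-- Example 3.7 (after Farber): in `ℤ[S,T]` with
`I = (S^{n+1}, Σ_{i=0}^{n} S^i T^{n-i})`, the power `(T−S)^{2n−1}` is congruent
mod `I` to `(−1)^n·C(2n−1,n)·(T^{n−1}S^n − T^n S^{n−1})`, and `(T−S)^{2n−1} ∉ I`. -/
theorem stmt12 (n : ℕ) (hn : 1 ≤ n)
    (S T : MvPolynomial (Fin 2) ℤ) (hS : S = MvPolynomial.X 0)
    (hT : T = MvPolynomial.X 1)
    (I : Ideal (MvPolynomial (Fin 2) ℤ))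
    (hI : I = Ideal.span {S ^ (n + 1), ∑ i ∈ Finset.range (n + 1), S ^ i * T ^ (n - i)}) :
    (T - S) ^ (2 * n - 1) -
      ((-1 : MvPolynomial (Fin 2) ℤ) ^ n * (Nat.choose (2 * n - 1) n : MvPolynomial (Fin 2) ℤ)) *
        (T ^ (n - 1) * S ^ n - T ^ n * S ^ (n - 1)) ∈ I ∧
    (T - S) ^ (2 * n - 1) ∉ I := by
  obtain ⟨k, rfl⟩ : ∃ k, n = k + 1 := ⟨n - 1, by omega⟩
  subst hS hT hI
  have e2n : 2 * (k + 1) - 1 = 2 * k + 1 := by omega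
  have e1 : k + 1 - 1 = k := by omega
  rw [e2n, e1]
  set g : MvPolynomial (Fin 2) ℤ :=
    ∑ i ∈ Finset.range (k + 1 + 1), X 0 ^ i * X 1 ^ (k + 1 - i) with hgdef
  constructor
  · -- membership: work in the quotient ring
    refine (Ideal.Quotient.eq).mp ?_
    set J := Ideal.span ({X 0 ^ (k + 1 + 1), g} : Set (MvPolynomial (Fin 2) ℤ)) with hJ
    have h1 : (Ideal.Quotient.mk J (X 0)) ^ (k + 1 + 1) = 0 := by
      rw [← map_pow]
      exact Ideal.Quotient.eq_zero_iff_mem.mpr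
        (Ideal.subset_span (Set.mem_insert _ _))
    have h2 : ∑ i ∈ Finset.range (k + 1 + 1),
        (Ideal.Quotient.mk J (X 0)) ^ i * (Ideal.Quotient.mk J (X 1)) ^ (k + 1 - i) = 0 := by
      have : Ideal.Quotient.mk J g = 0 :=
        Ideal.Quotient.eq_zero_iff_mem.mpr
          (Ideal.subset_span (Set.mem_insert_iff.mpr (Or.inr rfl)))
      rw [hgdef] at this
      simpa only [map_sum, map_mul, map_pow] using this
    have key := stmt12aux k (Ideal.Quotient.mk J (X 0)) (Ideal.Quotient.mk J (X 1)) h1 h2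
    simpa only [map_pow, map_sub, map_mul, map_neg, map_one, map_natCast] using key
  · -- non-membership
    intro hmem
    rw [Ideal.mem_span_pair] at hmem
    obtain ⟨A, B, hAB⟩ := hmem
    have hgT : g * (X 1 - X 0) =
        (X 1 : MvPolynomial (Fin 2) ℤ) ^ (k + 1 + 1) - X 0 ^ (k + 1 + 1) := by
      have hgs := geom_sum₂_mul (X 0 : MvPolynomial (Fin 2) ℤ) (X 1) (k + 1 + 1)
      have e : ∀ i, k + 1 + 1 - 1 - i = k + 1 - i := fun i => by omega
      simp only [e] at hgs
      rw [← hgdef] at hgs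
      linear_combination -hgs
    have hmul : A * (X 1 - X 0) * X 0 ^ (k + 1 + 1) + B * X 1 ^ (k + 1 + 1)
        - B * X 0 ^ (k + 1 + 1) = (X 1 - X 0) ^ (2 * k + 2) := by
      linear_combination (X 1 - X 0 : MvPolynomial (Fin 2) ℤ) * hAB - B * hgT
    set μ : Fin 2 →₀ ℕ := Finsupp.single 0 (k + 1) + Finsupp.single 1 (k + 1) with hμ
    have hc0 : ∀ (q : MvPolynomial (Fin 2) ℤ) (i : Fin 2),
        coeff μ (q * X i ^ (k + 1 + 1)) = 0 := by
      intro q i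
      rw [X_pow_eq_monomial, coeff_mul_monomial', if_neg]
      intro hle
      have h := Finsupp.single_le_iff.mp hle
      have hμi : μ i = k + 1 := by
        fin_cases i <;> simp [hμ, Finsupp.single_apply]
      omega
    have hco := congrArg (coeff μ) hmul
    rw [coeff_sub, coeff_add, hc0, hc0, hc0, stmt12aux2 k] at hco
    · have hchoose : (0 : ℤ) < ((2 * k + 2).choose (k + 1) : ℤ) := by
        exact_mod_cast Nat.choose_pos (show k + 1 ≤ 2 * k + 2 by omega)
      have hne : ((-1 : ℤ) ^ (k + 1) * ((2 * k + 2).choose (k + 1) : ℤ)) ≠ 0 :=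
        mul_ne_zero (pow_ne_zero _ (by norm_num)) hchoose.ne'
      apply hne
      linear_combination -hco
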